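/- arXiv:2207.08469 — 2 statements merged into one kernel-verified Lean document; each statement's English description precedes it below -/
import Mathlib

section
/- Fix an integer N ≥ 1 and p ∈ (0,1). The roots of the polynomial f(z) = ((p(z-1)+1)^N - (zp)^N)/(1 - p^N) are exactly z_k = (1/2)(1/p - 1)(-1 - i·cot(πk/N)) for k = 1, ..., N-1. In particular every root ζ satisfies Re(ζ) = (1 - 1/p)/2 < 0. -/
open Real

lemma key_trig (θ : ℝ) :
    (1 - Complex.exp (2*θ*Complex.I)) * ((Real.sin θ : ℂ) + Complex.I * (Real.cos θ)) =
      2 * (Real.sin θ) := by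
  have h1 : (2*(θ:ℂ)*Complex.I) = (θ:ℂ)*Complex.I + (θ:ℂ)*Complex.I := by ring
  rw [h1, Complex.exp_add, Complex.exp_mul_I]
  push_cast
  linear_combination (Complex.sin θ - Complex.I*Complex.cos θ) * Complex.sin_sq_add_cos_sq (θ:ℂ)
    - (Complex.cos θ * Complex.sin θ^2 * Complex.I + 2*Complex.cos θ^2 * Complex.sin θ
       + Complex.sin θ^3) * Complex.I_sq

lemma main_aux (N k : ℕ) (hN : 1 ≤ N) (hk1 : 1 ≤ k) (hk2 : k ≤ N - 1) (p : ℝ)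
    (hp0 : 0 < p) :
    (1 - Complex.exp (2*((π*k/N : ℝ):ℂ)*Complex.I)) *
      ((p:ℂ) * ((1/2:ℂ)*(1/(p:ℂ)-1)*(-1 - Complex.I*((Real.cot (π*k/N) : ℝ):ℂ))))
      = (p:ℂ) - 1 := by
  set θ : ℝ := π*k/N with hθ
  have hNk : k < N := by omega
  have hθ0 : 0 < θ :=
    div_pos (mul_pos Real.pi_pos (by exact_mod_cast hk1)) (by exact_mod_cast hN)
  have hθπ : θ < π := by
    rw [hθ, div_lt_iff₀ (by exact_mod_cast hN)]
    have : (k:ℝ) < N := by exact_mod_cast hNk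
    nlinarith [Real.pi_pos]
  have hs : Real.sin θ ≠ 0 := ne_of_gt (Real.sin_pos_of_pos_of_lt_pi hθ0 hθπ)
  have hpC : (p:ℂ) ≠ 0 := by exact_mod_cast ne_of_gt hp0
  have hk := key_trig θ
  push_cast at hk
  rw [Real.cot_eq_cos_div_sin]
  push_cast
  have hsC' : Complex.sin θ ≠ 0 := by
    rw [← Complex.ofReal_sin]; exact_mod_cast hs
  field_simp
  linear_combination ((p:ℂ) - 1) * hk

lemma omega_pow (N k : ℕ) (hN : 1 ≤ N) :
    (Complex.exp (2*((π*k/N : ℝ):ℂ)*Complex.I)) ^ N = 1 := by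
  rw [← Complex.exp_nat_mul]
  have hNne : (N:ℂ) ≠ 0 := Nat.cast_ne_zero.mpr (by omega)
  have harg : (N:ℂ) * (2*((π*k/N : ℝ):ℂ)*Complex.I) = (k:ℤ) * (2*π*Complex.I) := by
    push_cast
    field_simp
  rw [harg, Complex.exp_int_mul_two_pi_mul_I]

theorem stmt_5 (N : ℕ) (hN : 1 ≤ N) (p : ℝ) (hp : p ∈ Set.Ioo (0 : ℝ) 1) :
    (∀ z : ℂ,
        (((p : ℂ) * (z - 1) + 1) ^ N - (z * p) ^ N) / (1 - (p : ℂ) ^ N) = 0 ↔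
        ∃ k : ℕ, 1 ≤ k ∧ k ≤ N - 1 ∧
          z = (1 / 2 : ℂ) * (1 / (p : ℂ) - 1) *
              (-1 - Complex.I * (Real.cot (Real.pi * k / N) : ℂ))) ∧
    (∀ z : ℂ,
        (((p : ℂ) * (z - 1) + 1) ^ N - (z * p) ^ N) / (1 - (p : ℂ) ^ N) = 0 →
        z.re = (1 - 1 / p) / 2 ∧ (1 - 1 / p) / 2 < 0) := by
  obtain ⟨hp0, hp1⟩ := hp
  have hpC : (p:ℂ) ≠ 0 := by exact_mod_cast ne_of_gt hp0
  have hpne1 : (p:ℂ) ≠ 1 := fun h => absurd (by exact_mod_cast h) (ne_of_lt hp1)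
  have hpN : p ^ N < 1 := pow_lt_one₀ (le_of_lt hp0) hp1 (by omega)
  have hden : (1 : ℂ) - (p:ℂ) ^ N ≠ 0 := by
    have h : ((1 - p ^ N : ℝ) : ℂ) ≠ 0 := by
      exact_mod_cast ne_of_gt (by linarith : (0:ℝ) < 1 - p ^ N)
    push_cast at h
    exact h
  have hinvp : 1 < 1/p := by rw [lt_div_iff₀ hp0]; linarith
  have main : ∀ z : ℂ,
      (((p : ℂ) * (z - 1) + 1) ^ N - (z * p) ^ N) / (1 - (p : ℂ) ^ N) = 0 ↔
      ∃ k : ℕ, 1 ≤ k ∧ k ≤ N - 1 ∧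
        z = (1 / 2 : ℂ) * (1 / (p : ℂ) - 1) *
            (-1 - Complex.I * (Real.cot (Real.pi * k / N) : ℂ)) := by
    intro z
    rw [div_eq_zero_iff, or_iff_left hden, sub_eq_zero]
    constructor
    · intro heq
      have hb : z * (p:ℂ) ≠ 0 := by
        intro hb0
        rw [hb0, zero_pow (by omega)] at heq
        have ha0 : (p:ℂ) * (z - 1) + 1 = 0 := pow_eq_zero_iff (by omega) |>.mp heq
        have hz0 : z = 0 := by
          rcases mul_eq_zero.mp hb0 with h | h
          · exact h
          · exact absurd h hpC
        rw [hz0] at ha0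
        exact hpne1 (by linear_combination -ha0)
      have hw : (((p:ℂ) * (z - 1) + 1) / (z * (p:ℂ))) ^ N = 1 := by
        rw [div_pow, heq, div_self (pow_ne_zero _ hb)]
      have hprim := Complex.isPrimitiveRoot_exp N (by omega)
      haveI : NeZero N := ⟨by omega⟩
      obtain ⟨k, hkN, hk⟩ := hprim.eq_pow_of_pow_eq_one hw
      have hζk : Complex.exp (2 * ↑π * Complex.I / ↑N) ^ k
          = Complex.exp (2*((π*k/N : ℝ):ℂ)*Complex.I) := by
        rw [← Complex.exp_nat_mul]
        congr 1
        push_cast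
        ring
      have ha : (p:ℂ) * (z - 1) + 1
          = Complex.exp (2*((π*k/N : ℝ):ℂ)*Complex.I) * (z * (p:ℂ)) := by
        rw [← hζk, hk, div_mul_cancel₀ _ hb]
      have hk1 : 1 ≤ k := by
        rcases Nat.eq_zero_or_pos k with h0 | h0
        · exfalso
          have hω1 : Complex.exp (2*((π*k/N : ℝ):ℂ)*Complex.I) = 1 := by
            rw [← hζk, h0, pow_zero]
          rw [hω1, one_mul] at ha
          exact hpne1 (by linear_combination -ha)
        · exact h0
      refine ⟨k, hk1, by omega, ?_⟩
      have haux := main_aux N k hN hk1 (by omega) p hp0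
      set ω := Complex.exp (2*((π*k/N : ℝ):ℂ)*Complex.I) with hω
      have hω1 : (1:ℂ) - ω ≠ 0 := by
        intro h
        rw [h, zero_mul] at haux
        exact hpne1 (by linear_combination -haux)
      have hzc : (1 - ω) * ((p:ℂ) * z) = (p:ℂ) - 1 := by linear_combination ha
      have hzz := hzc.trans haux.symm
      exact mul_left_cancel₀ hpC (mul_left_cancel₀ hω1 hzz)
    · rintro ⟨k, hk1, hk2, rfl⟩
      have haux := main_aux N k hN hk1 hk2 p hp0
      have ha : (p:ℂ) * ((1 / 2 : ℂ) * (1 / (p : ℂ) - 1) *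
          (-1 - Complex.I * (Real.cot (Real.pi * k / N) : ℂ)) - 1) + 1
          = Complex.exp (2*((π*k/N : ℝ):ℂ)*Complex.I) * (((1 / 2 : ℂ) * (1 / (p : ℂ) - 1) *
          (-1 - Complex.I * (Real.cot (Real.pi * k / N) : ℂ))) * (p:ℂ)) := by
        linear_combination haux
      rw [ha, mul_pow, omega_pow N k hN, one_mul]
  refine ⟨main, fun z hz => ?_⟩
  obtain ⟨k, hk1, hk2, rfl⟩ := (main z).mp hz
  refine ⟨?_, by linarith⟩
  set t : ℝ := Real.cot (Real.pi * k / N) with ht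
  have hrw : (1 / 2 : ℂ) * (1 / (p : ℂ) - 1) * (-1 - Complex.I * (t:ℂ))
      = Complex.ofReal ((1 - 1/p)/2) + Complex.ofReal (-(1/p - 1)*t/2) * Complex.I := by
    have hp' : (p:ℂ) ≠ 0 := hpC
    push_cast
    field_simp
    ring
  rw [hrw]
  simp
end

section
/- For integers N ≥ 1, the polynomial E(z) = (z+1)^N + z^N has all its roots on the line {z ∈ ℂ : Re(z) = -1/2}. -/
theorem stmt_8 (N : ℕ) (hN : 1 ≤ N) (z : ℂ)
    (hz : (z + 1) ^ N + z ^ N = 0) : z.re = -1/2 := by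
  have h1 : (z + 1) ^ N = -z ^ N := by linear_combination hz
  have h2 : ‖z + 1‖ ^ N = ‖z‖ ^ N := by
    rw [← norm_pow, ← norm_pow, h1, norm_neg]
  have h3 : ‖z + 1‖ = ‖z‖ :=
    (pow_left_inj₀ (norm_nonneg _) (norm_nonneg _) (by omega)).1 h2
  have h4 : Complex.normSq (z + 1) = Complex.normSq z := by
    rw [← Complex.sq_norm, ← Complex.sq_norm, h3]
  simp [Complex.normSq_apply] at h4
  linarith
end
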